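/- arXiv:2202.10147 — 4 statements merged into one kernel-verified Lean document; each statement's English description precedes it below -/
import Mathlib

section
/- Let G be a simple graph on [n] with edge ideal I(G). Then I(G) is quasi-linear if and only if the complement graph \bar{G} contains no induced 4-cycle. -/
open MvPolynomial

/-- The monomial `x^u` in the polynomial ring `K[x_i : i ∈ σ]`. -/
noncomputable def mon (K : Type) [Field K] {σ : Type} (u : σ →₀ ℕ) :
    MvPolynomial σ K := MvPolynomial.monomial u 1

/-- Total degree of an exponent vector. -/
def mdeg {σ : Type} (u : σ →₀ ℕ) : ℕ := u.sum fun _ e => e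

/-- The monomial ideal generated by the monomials with exponent vectors in `S`. -/
noncomputable def monIdeal (K : Type) [Field K] {σ : Type} (S : Set (σ →₀ ℕ)) :
    Ideal (MvPolynomial σ K) := Ideal.span ((mon K) '' S)

/-- An ideal is generated by variables. -/
def genByVars {K : Type} [Field K] {σ : Type} (J : Ideal (MvPolynomial σ K)) : Prop :=
  ∃ A : Set σ, J = Ideal.span ((fun i => (X i : MvPolynomial σ K)) '' A)

/-- An ideal is generated by linear forms. -/
def genByLinForms {K : Type} [Field K] {σ : Type} (J : Ideal (MvPolynomial σ K)) : Prop :=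
  ∃ S : Set (MvPolynomial σ K), (∀ f ∈ S, f.IsHomogeneous 1) ∧ J = Ideal.span S

/-- `S` is an antichain under divisibility of monomials, i.e. it is the minimal
monomial generating set `G(I)` of the monomial ideal `I` it generates. -/
def IsMinGenSet {σ : Type} (S : Set (σ →₀ ℕ)) : Prop :=
  ∀ u ∈ S, ∀ v ∈ S, u ≤ v → u = v

/-- A monomial ideal, presented by its minimal monomial generating set `S`, is
quasi-linear if for every `u ∈ S` the colon ideal `(G(I) \ {u}) : u` is generated
by variables. -/
def QuasiLinear (K : Type) [Field K] {σ : Type} (S : Set (σ →₀ ℕ)) : Prop :=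
  ∀ u ∈ S, genByVars (Submodule.colon (monIdeal K (S \ {u})) (Ideal.span {mon K u}))

/-- A minimal graded free resolution of an ideal `I` in a polynomial ring:
graded free modules `F i = ⊕_k R(-dg i k)` of rank `b i`, differentials
`F (i+1) → F i` given by the matrices `A i`, whose entries are homogeneous of the
appropriate degree and of positive degree (this is minimality, i.e. all entries lie
in the graded maximal ideal), together with an augmentation `F 0 → I` given by the
homogeneous generators `g`, everything being exact. -/
structure MinFreeRes {K : Type} [Field K] {σ : Type} (I : Ideal (MvPolynomial σ K)) where
  b : ℕ → ℕ
  dg : (i : ℕ) → Fin (b i) → ℕ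
  g : Fin (b 0) → MvPolynomial σ K
  A : (i : ℕ) → Matrix (Fin (b i)) (Fin (b (i+1))) (MvPolynomial σ K)
  g_hom : ∀ k, (g k).IsHomogeneous (dg 0 k)
  A_hom : ∀ i k l, A i k l = 0 ∨
    ((A i k l).IsHomogeneous (dg (i+1) l - dg i k) ∧ dg i k < dg (i+1) l)
  aug_range : LinearMap.range (Fintype.linearCombination (MvPolynomial σ K)
      g) = I
  aug_exact : LinearMap.ker (Fintype.linearCombination (MvPolynomial σ K)
      g) = LinearMap.range ((A 0).mulVecLin)
  is_exact : ∀ i, LinearMap.ker ((A i).mulVecLin) = LinearMap.range ((A (i+1)).mulVecLin)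

/-- The graded Betti number `β_{i,j}` read off from a minimal graded free resolution:
the number of generators of the `i`-th free module of degree `j`. -/
noncomputable def MinFreeRes.beta {K : Type} [Field K] {σ : Type}
    {I : Ideal (MvPolynomial σ K)} (res : MinFreeRes I) (i j : ℕ) : ℕ :=
  (Finset.univ.filter fun k => res.dg i k = j).card

/-- `I` has a `d`-linear resolution: it has a minimal graded free resolution in which the
`i`-th free module is generated entirely in degree `i + d`, i.e. `β_{i,j}(I) = 0`
whenever `j - i ≠ d`. -/
def HasLinRes {K : Type} [Field K] {σ : Type} (I : Ideal (MvPolynomial σ K))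
    (d : ℕ) : Prop :=
  ∃ res : MinFreeRes I, ∀ i k, res.dg i k = i + d

/-- `reg I ≤ r`: a minimal graded free resolution of `I` has all generators of the
`i`-th free module in degrees `≤ i + r`, i.e. `β_{i,j}(I) = 0` whenever `j - i > r`. -/
def RegLE {K : Type} [Field K] {σ : Type} (I : Ideal (MvPolynomial σ K)) (r : ℕ) : Prop :=
  ∃ res : MinFreeRes I, ∀ i k, res.dg i k ≤ i + r

section aux

variable {K : Type} [Field K] {σ : Type}

lemma mon_support (w : σ →₀ ℕ) : (mon K w).support = {w} := by
  classical
  rw [mon, support_monomial, if_neg one_ne_zero]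

lemma mem_colon_iff (T : Set (σ →₀ ℕ)) (u : σ →₀ ℕ) (f : MvPolynomial σ K) :
    f ∈ Submodule.colon (monIdeal K T) (Ideal.span {mon K u}) ↔
      f * mon K u ∈ monIdeal K T := by
  constructor
  · intro h
    simpa [smul_eq_mul] using Submodule.mem_colon.mp h (mon K u) (Ideal.subset_span rfl)
  · intro h
    rw [Submodule.mem_colon]
    intro p hp
    obtain ⟨c, rfl⟩ := Ideal.mem_span_singleton'.mp hp
    have h2 : f • (c * mon K u) = c * (f * mon K u) := by
      rw [smul_eq_mul]; ring
    rw [h2]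
    exact Ideal.mul_mem_left _ _ h

lemma mul_mon_mem_iff (T : Set (σ →₀ ℕ)) (u : σ →₀ ℕ) (f : MvPolynomial σ K) :
    f * mon K u ∈ monIdeal K T ↔ ∀ m ∈ f.support, ∃ v ∈ T, v ≤ m + u := by
  have himg : (mon K) '' T = (fun s => monomial s (1 : K)) '' T := rfl
  rw [monIdeal, himg, mem_ideal_span_monomial_image]
  constructor
  · intro h m hm
    have hmem : m + u ∈ (f * mon K u).support := by
      rw [MvPolynomial.mem_support_iff, mon, coeff_mul_monomial', if_pos le_add_self,
        add_tsub_cancel_right, mul_one]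
      exact MvPolynomial.mem_support_iff.mp hm
    exact h _ hmem
  · intro h m hm
    rw [MvPolynomial.mem_support_iff, mon, coeff_mul_monomial'] at hm
    by_cases hle : u ≤ m
    · rw [if_pos hle, mul_one] at hm
      obtain ⟨v, hv, h2⟩ := h (m - u) (MvPolynomial.mem_support_iff.mpr hm)
      exact ⟨v, hv, h2.trans (le_of_eq (tsub_add_cancel_of_le hle))⟩
    · rw [if_neg hle] at hm; exact absurd rfl hm

lemma mon_mem_colon_iff (T : Set (σ →₀ ℕ)) (u w : σ →₀ ℕ) :
    mon K w ∈ Submodule.colon (monIdeal K T) (Ideal.span {mon K u}) ↔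
      ∃ v ∈ T, v ≤ w + u := by
  rw [mem_colon_iff, mul_mon_mem_iff, mon_support]
  simp

lemma X_eq_mon (k : σ) : (X k : MvPolynomial σ K) = mon K (Finsupp.single k 1) := rfl

lemma Eapp [DecidableEq σ] (i j k : σ) :
    (Finsupp.single i 1 + Finsupp.single j 1 : σ →₀ ℕ) k
      = (if i = k then 1 else 0) + (if j = k then 1 else 0) := by
  simp [Finsupp.single_apply]

end aux

/-- Let `G` be a simple graph on `[n]` with edge ideal
`I(G) = (x_i x_j : {i,j} ∈ E(G))`.  Then `I(G)` is quasi-linear if and only if the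
complement graph `Ḡ` contains no induced 4-cycle. -/
theorem stmt_9 {K : Type} [Field K] {n : ℕ} (G : SimpleGraph (Fin n)) :
    QuasiLinear K
      {w : Fin n →₀ ℕ | ∃ i j, G.Adj i j ∧ w = Finsupp.single i 1 + Finsupp.single j 1}
    ↔ ¬ ∃ a b c d : Fin n, a ≠ c ∧ b ≠ d ∧
        Gᶜ.Adj a b ∧ Gᶜ.Adj b c ∧ Gᶜ.Adj c d ∧ Gᶜ.Adj d a ∧
        ¬ Gᶜ.Adj a c ∧ ¬ Gᶜ.Adj b d := by
  classical
  set S : Set (Fin n →₀ ℕ) :=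
    {w : Fin n →₀ ℕ | ∃ i j, G.Adj i j ∧ w = Finsupp.single i 1 + Finsupp.single j 1} with hS
  have hE : ∀ i j : Fin n, G.Adj i j →
      (Finsupp.single i 1 + Finsupp.single j 1 : Fin n →₀ ℕ) ∈ S :=
    fun i j h => ⟨i, j, h, rfl⟩
  constructor
  · -- quasi-linear → no induced C4
    intro hQL
    rintro ⟨a, b, c, d, hac, hbd, hab, hbc, hcd, hda, hnac, hnbd⟩
    rw [SimpleGraph.compl_adj] at hab hbc hcd hda
    have Gac : G.Adj a c := by
      by_contra h; exact hnac (SimpleGraph.compl_adj G a c |>.mpr ⟨hac, h⟩)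
    have Gbd : G.Adj b d := by
      by_contra h; exact hnbd (SimpleGraph.compl_adj G b d |>.mpr ⟨hbd, h⟩)
    set u : Fin n →₀ ℕ := Finsupp.single a 1 + Finsupp.single c 1 with hu
    obtain ⟨A, hA⟩ := hQL u (hE a c Gac)
    have hbdu : (Finsupp.single b 1 + Finsupp.single d 1 : Fin n →₀ ℕ) ≠ u := by
      intro h
      have h2 := congrArg (fun w : Fin n →₀ ℕ => w b) h
      simp [hu, Eapp, Ne.symm hbd, hab.1, Ne.symm hbc.1] at h2
    have hmem : mon K (Finsupp.single b 1 + Finsupp.single d 1) ∈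
        Submodule.colon (monIdeal K (S \ {u})) (Ideal.span {mon K u}) := by
      rw [mon_mem_colon_iff]
      exact ⟨_, ⟨hE b d Gbd, hbdu⟩, le_self_add⟩
    rw [hA, mem_ideal_span_X_image] at hmem
    obtain ⟨k, hkA, hk⟩ := hmem _ (by rw [mon_support]; exact Finset.mem_singleton_self _)
    have hkbd : k = b ∨ k = d := by
      by_contra h; push_neg at h
      simp [Eapp, Ne.symm h.1, Ne.symm h.2] at hk
    have hXk : (X k : MvPolynomial (Fin n) K) ∈
        Submodule.colon (monIdeal K (S \ {u})) (Ideal.span {mon K u}) := by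
      rw [hA]
      exact Ideal.subset_span ⟨k, hkA, rfl⟩
    rw [X_eq_mon, mon_mem_colon_iff] at hXk
    obtain ⟨v, ⟨hvS, hvu⟩, hvle⟩ := hXk
    obtain ⟨i, j, hij, rfl⟩ := hvS
    have hij' : i ≠ j := G.ne_of_adj hij
    rw [Finsupp.le_def] at hvle
    have hmemi : i = k ∨ i = a ∨ i = c := by
      by_contra h; push_neg at h
      have h2 := hvle i
      simp [hu, Eapp, Finsupp.add_apply, Finsupp.single_apply,
        Ne.symm h.1, Ne.symm h.2.1, Ne.symm h.2.2] at h2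
      all_goals omega
    have hmemj : j = k ∨ j = a ∨ j = c := by
      by_contra h; push_neg at h
      have h2 := hvle j
      simp [hu, Eapp, Finsupp.add_apply, Finsupp.single_apply,
        Ne.symm h.1, Ne.symm h.2.1, Ne.symm h.2.2] at h2
      all_goals omega
    have hnotac : ¬((i = a ∧ j = c) ∨ (i = c ∧ j = a)) := by
      rintro (⟨rfl, rfl⟩ | ⟨rfl, rfl⟩)
      · exact hvu rfl
      · exact hvu (add_comm _ _)
    have hadjk : G.Adj k a ∨ G.Adj k c := by
      rcases hmemi with rfl | rfl | rfl
      · rcases hmemj with rfl | rfl | rfl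
        · exact absurd rfl hij'
        · exact Or.inl hij
        · exact Or.inr hij
      · rcases hmemj with rfl | rfl | rfl
        · exact Or.inl hij.symm
        · exact absurd rfl hij'
        · exact absurd (Or.inl ⟨rfl, rfl⟩) hnotac
      · rcases hmemj with rfl | rfl | rfl
        · exact Or.inr hij.symm
        · exact absurd (Or.inr ⟨rfl, rfl⟩) hnotac
        · exact absurd rfl hij'
    rcases hkbd with rfl | rfl
    · rcases hadjk with h | h
      · exact hab.2 h.symm
      · exact hbc.2 h
    · rcases hadjk with h | h
      · exact hda.2 h
      · exact hcd.2 h.symm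
  · -- no induced C4 → quasi-linear
    intro hC4 u hu
    obtain ⟨p, q, hpq, rfl⟩ := hu
    set u : Fin n →₀ ℕ := Finsupp.single p 1 + Finsupp.single q 1 with hu
    have hpq' : p ≠ q := G.ne_of_adj hpq
    refine ⟨{k | k ≠ p ∧ k ≠ q ∧ (G.Adj p k ∨ G.Adj q k)}, ?_⟩
    ext f
    rw [mem_colon_iff, mul_mon_mem_iff, mem_ideal_span_X_image]
    refine forall₂_congr fun m _ => ?_
    constructor
    · rintro ⟨v, ⟨hvS, hvu⟩, hvle⟩
      obtain ⟨i, j, hij, rfl⟩ := hvS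
      have hij' : i ≠ j := G.ne_of_adj hij
      rw [Finsupp.le_def] at hvle
      by_cases hip : i = p
      · subst hip
        have hjq : j ≠ q := fun e => hvu (by rw [e]; exact rfl)
        have hji : j ≠ i := Ne.symm hij'
        refine ⟨j, ⟨hji, hjq, Or.inl hij⟩, ?_⟩
        have h2 := hvle j
        simp [hu, Eapp, Finsupp.add_apply, Finsupp.single_apply, hij', Ne.symm hjq] at h2
        all_goals omega
      · by_cases hiq : i = q
        · subst hiq
          have hjp : j ≠ p := fun e => hvu (by rw [e]; exact add_comm _ _)
          have hji : j ≠ i := Ne.symm hij'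
          refine ⟨j, ⟨hjp, hji, Or.inr hij⟩, ?_⟩
          have h2 := hvle j
          simp [hu, Eapp, Finsupp.add_apply, Finsupp.single_apply, hij', Ne.symm hjp] at h2
          all_goals omega
        · have h2 := hvle i
          simp [hu, Eapp, Finsupp.add_apply, Finsupp.single_apply,
            Ne.symm hip, Ne.symm hiq, Ne.symm hij'] at h2
          have hmi : m i ≠ 0 := by omega
          by_cases hjp : j = p
          · subst hjp
            exact ⟨i, ⟨hip, hiq, Or.inl hij.symm⟩, hmi⟩
          · by_cases hjq : j = q
            · subst hjq
              exact ⟨i, ⟨hip, hiq, Or.inr hij.symm⟩, hmi⟩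
            · have h3 := hvle j
              simp [hu, Eapp, Finsupp.add_apply, Finsupp.single_apply,
                Ne.symm hjp, Ne.symm hjq, hij'] at h3
              have hmj : m j ≠ 0 := by omega
              by_cases hi : G.Adj p i ∨ G.Adj q i
              · exact ⟨i, ⟨hip, hiq, hi⟩, hmi⟩
              by_cases hj : G.Adj p j ∨ G.Adj q j
              · exact ⟨j, ⟨hjp, hjq, hj⟩, hmj⟩
              push_neg at hi hj
              exact absurd ⟨p, i, q, j, hpq', hij',
                (SimpleGraph.compl_adj G p i).mpr ⟨Ne.symm hip, hi.1⟩,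
                (SimpleGraph.compl_adj G i q).mpr ⟨hiq, fun h => hi.2 h.symm⟩,
                (SimpleGraph.compl_adj G q j).mpr ⟨Ne.symm hjq, hj.2⟩,
                (SimpleGraph.compl_adj G j p).mpr ⟨hjp, fun h => hj.1 h.symm⟩,
                (by rw [SimpleGraph.compl_adj]; push_neg; intro _; exact hpq),
                (by rw [SimpleGraph.compl_adj]; push_neg; intro _; exact hij)⟩ hC4
    · rintro ⟨k, ⟨hkp, hkq, hadj⟩, hmk⟩
      have hmk1 : 1 ≤ m k := Nat.one_le_iff_ne_zero.mpr hmk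
      rcases hadj with h | h
      · refine ⟨Finsupp.single p 1 + Finsupp.single k 1, ⟨hE p k h, ?_⟩, ?_⟩
        · intro e
          have h2 := congrArg (fun w : Fin n →₀ ℕ => w k) e
          simp [hu, Eapp, Ne.symm hkp, Ne.symm hkq] at h2
        · rw [Finsupp.le_def]
          intro l
          by_cases hkl : k = l
          · subst hkl
            simp only [hu, Eapp, Finsupp.add_apply, Finsupp.single_apply]
            split_ifs <;> omega
          · simp only [hu, Eapp, Finsupp.add_apply, Finsupp.single_apply, if_neg hkl]
            split_ifs <;> omega
      · refine ⟨Finsupp.single q 1 + Finsupp.single k 1, ⟨hE q k h, ?_⟩, ?_⟩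
        · intro e
          have h2 := congrArg (fun w : Fin n →₀ ℕ => w k) e
          simp [hu, Eapp, Ne.symm hkp, Ne.symm hkq] at h2
        · rw [Finsupp.le_def]
          intro l
          by_cases hkl : k = l
          · subst hkl
            simp only [hu, Eapp, Finsupp.add_apply, Finsupp.single_apply]
            split_ifs <;> omega
          · simp only [hu, Eapp, Finsupp.add_apply, Finsupp.single_apply, if_neg hkl]
            split_ifs <;> omega
end

section
/- Let n = 2, m = (x,y), d ≥ 2, and u = x^a y^b with a > 0, b > 0, a + b = d. Then the ideal generated by all monomials of degree d other than u is not quasi-linear. -/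
open MvPolynomial

lemma mdeg_fin2 (u : Fin 2 →₀ ℕ) : mdeg u = u 0 + u 1 := by
  rw [mdeg, Finsupp.sum_fintype _ _ (fun _ => rfl), Fin.sum_univ_two]

lemma mon_mem_monIdeal_iff {K : Type} [Field K] {S : Set (Fin 2 →₀ ℕ)} {w : Fin 2 →₀ ℕ} :
    mon K w ∈ monIdeal K S ↔ ∃ s ∈ S, s ≤ w := by
  classical
  have : monIdeal K S = Ideal.span ((fun s => monomial s (1 : K)) '' S) := rfl
  rw [this, mem_ideal_span_monomial_image]
  constructor
  · intro h
    exact h w (by simp [mon, support_monomial])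
  · intro h xi hxi
    rw [mon, support_monomial, if_neg one_ne_zero, Finset.mem_singleton] at hxi
    exact hxi ▸ h

/-- Let `n = 2`, `𝔪 = (x, y)`, `d ≥ 2`, and `u = x^a y^b` with
`a > 0`, `b > 0`, `a + b = d`.  Then the ideal generated by all monomials of degree `d`
other than `u` (i.e. by `G(𝔪^d) \ {u}`) is not quasi-linear. -/
theorem stmt_10 {K : Type} [Field K] {d a b : ℕ}
    (ha : 0 < a) (hb : 0 < b) (hab : a + b = d) :
    ¬ QuasiLinear K
        {v : Fin 2 →₀ ℕ | mdeg v = d ∧ v ≠ Finsupp.single 0 a + Finsupp.single 1 b} := by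
  intro hql
  set u : Fin 2 →₀ ℕ := Finsupp.single 0 a + Finsupp.single 1 b with hu
  set S : Set (Fin 2 →₀ ℕ) := {v : Fin 2 →₀ ℕ | mdeg v = d ∧ v ≠ u} with hS
  set v : Fin 2 →₀ ℕ := Finsupp.single 0 (a+1) + Finsupp.single 1 (b-1) with hv
  have hv0 : v 0 = a + 1 := by simp [hv]
  have hv1 : v 1 = b - 1 := by simp [hv, Finsupp.single_apply]
  have hu0 : u 0 = a := by simp [hu]
  have hu1 : u 1 = b := by simp [hu, Finsupp.single_apply]
  have hvS : v ∈ S := by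
    constructor
    · rw [mdeg_fin2, hv0, hv1]; omega
    · intro h
      have := congrArg (fun f => f 0) h
      rw [hv0, hu0] at this; omega
  obtain ⟨A, hA⟩ := hql v hvS
  -- step 1 : y^2 ∈ colon
  set w : Fin 2 →₀ ℕ := Finsupp.single 0 (a-1) + Finsupp.single 1 (b+1) with hw
  have hw0 : w 0 = a - 1 := by simp [hw]
  have hw1 : w 1 = b + 1 := by simp [hw, Finsupp.single_apply]
  have hwS : w ∈ S \ {v} := by
    refine ⟨⟨?_, ?_⟩, ?_⟩
    · rw [mdeg_fin2, hw0, hw1]; omega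
    · intro h
      have := congrArg (fun f => f 0) h
      rw [hw0, hu0] at this; omega
    · intro h
      have := congrArg (fun f => f 0) (Set.mem_singleton_iff.mp h)
      rw [hw0, hv0] at this; omega
  have hy2 : mon K (Finsupp.single 1 2) ∈
      Submodule.colon (monIdeal K (S \ {v})) (Ideal.span {mon K v}) := by
    rw [Ideal.mem_colon_span_singleton]
    have : mon K (Finsupp.single 1 2) * mon K v = mon K (Finsupp.single 1 2 + v) := by
      simp [mon, monomial_mul]
    rw [this, mon_mem_monIdeal_iff]
    refine ⟨w, hwS, ?_⟩
    intro i
    fin_cases i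
    · show w 0 ≤ ((Finsupp.single 1 2 + v : Fin 2 →₀ ℕ) 0)
      simp only [Finsupp.add_apply, hw0, hv0, Finsupp.single_apply]; omega
    · show w 1 ≤ ((Finsupp.single 1 2 + v : Fin 2 →₀ ℕ) 1)
      simp [Finsupp.add_apply, hw1, hv1, Finsupp.single_apply]; omega
  -- step 2: from genByVars, 1 ∈ A
  have h1A : (1 : Fin 2) ∈ A := by
    rw [hA, mem_ideal_span_X_image] at hy2
    obtain ⟨i, hiA, hi⟩ := hy2 (Finsupp.single 1 2) (by simp [mon, support_monomial])
    rw [Finsupp.single_apply] at hi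
    rcases eq_or_ne (1 : Fin 2) i with h | h
    · exact h ▸ hiA
    · simp [if_neg h] at hi
  -- step 3: X 1 ∈ colon → contradiction
  have hX1 : (X 1 : MvPolynomial (Fin 2) K) ∈
      Submodule.colon (monIdeal K (S \ {v})) (Ideal.span {mon K v}) := by
    rw [hA]
    exact Ideal.subset_span ⟨1, h1A, rfl⟩
  rw [Ideal.mem_colon_span_singleton] at hX1
  have hXmon : (X 1 : MvPolynomial (Fin 2) K) * mon K v = mon K (Finsupp.single 1 1 + v) := by
    rw [X, mon, mon, monomial_mul, one_mul]
  rw [hXmon, mon_mem_monIdeal_iff] at hX1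
  obtain ⟨t, ⟨⟨htd, htu⟩, htv⟩, hle⟩ := hX1
  have h0 := hle 0
  have h1 := hle 1
  simp only [Finsupp.add_apply, Finsupp.single_apply, hv0, hv1] at h0 h1
  norm_num at h0 h1
  rw [mdeg_fin2] at htd
  -- t 0 ≤ a+1, t 1 ≤ b, t 0 + t 1 = d = a + b
  have ht0 : t 0 = a ∨ t 0 = a + 1 := by omega
  rcases ht0 with h | h
  · apply htu
    have ht1 : t 1 = b := by omega
    ext i; fin_cases i
    · show t 0 = u 0; rw [h, hu0]
    · show t 1 = u 1; rw [hu1]; exact ht1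
  · apply htv
    have ht1 : t 1 = b - 1 := by omega
    ext i; fin_cases i
    · show t 0 = v 0; rw [h, hv0]
    · show t 1 = v 1; rw [hv1]; exact ht1
end

section
/- Let m = (x₁,...,x_n), d ≥ 2, and u ∈ G(m^d). Then the ideal generated by G(m^d)\{u} is quasi-linear if and only if |supp(u)| ≠ 2. -/
open MvPolynomial

section Aux

variable {σ : Type} [DecidableEq σ]

lemma mdeg_zero : mdeg (0 : σ →₀ ℕ) = 0 := Finsupp.sum_zero_index

lemma mdeg_add (a b : σ →₀ ℕ) : mdeg (a + b) = mdeg a + mdeg b :=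
  Finsupp.sum_add_index' (fun _ => rfl) (fun _ _ _ => rfl)

lemma mdeg_single (i : σ) (k : ℕ) : mdeg (Finsupp.single i k) = k :=
  Finsupp.sum_single_index rfl

lemma mdeg_eq_zero {c : σ →₀ ℕ} (h : mdeg c = 0) : c = 0 := by
  rw [mdeg, Finsupp.sum] at h
  ext i
  by_cases hi : i ∈ c.support
  · exact (Finset.sum_eq_zero_iff.mp h i hi)
  · simpa using Finsupp.notMem_support_iff.mp hi

lemma mdeg_mono {a b : σ →₀ ℕ} (h : a ≤ b) : mdeg a ≤ mdeg b := by
  obtain ⟨c, rfl⟩ := le_iff_exists_add.mp h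
  rw [mdeg_add]; omega

lemma eq_of_le_of_mdeg_le {a b : σ →₀ ℕ} (h : a ≤ b) (h2 : mdeg b ≤ mdeg a) : a = b := by
  obtain ⟨c, rfl⟩ := le_iff_exists_add.mp h
  rw [mdeg_add] at h2
  have hc : mdeg c = 0 := by omega
  rw [mdeg_eq_zero hc, add_zero]

lemma apply_le_mdeg (v : σ →₀ ℕ) (i : σ) : v i ≤ mdeg v := by
  have h : Finsupp.single i (v i) ≤ v := Finsupp.single_le_iff.mpr le_rfl
  simpa [mdeg_single] using mdeg_mono h

lemma exists_lt_of_ne {v w : σ →₀ ℕ} (h : v ≠ w) (hdm : mdeg w ≤ mdeg v) :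
    ∃ i, w i < v i := by
  by_contra hc
  push_neg at hc
  exact h (eq_of_le_of_mdeg_le (Finsupp.le_def.mpr hc) hdm)

lemma exists_single_add {M v : σ →₀ ℕ} (h : v ≤ M) (hdm : mdeg M = mdeg v + 1) :
    ∃ j, M = v + Finsupp.single j 1 := by
  obtain ⟨c, rfl⟩ := le_iff_exists_add.mp h
  rw [mdeg_add] at hdm
  have hc : mdeg c = 1 := by omega
  have hcne : c ≠ 0 := by
    intro h0; rw [h0, mdeg_zero] at hc; omega
  obtain ⟨j, hj⟩ := Finsupp.ne_iff.mp hcne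
  simp only [Finsupp.coe_zero, Pi.zero_apply] at hj
  have h1 : Finsupp.single j 1 ≤ c := by
    rw [Finsupp.single_le_iff]; omega
  have h2 : Finsupp.single j 1 = c :=
    eq_of_le_of_mdeg_le h1 (by rw [mdeg_single, hc])
  exact ⟨j, by rw [h2]⟩

lemma mdeg_eq_of_support_subset {c : σ →₀ ℕ} {i : σ} (h : c.support ⊆ {i}) :
    mdeg c = c i := by
  by_cases hi : i ∈ c.support
  · have hs : c.support = {i} := Finset.Subset.antisymm h (by simpa using hi)
    rw [mdeg, Finsupp.sum, hs, Finset.sum_singleton]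
  · have hs : c.support = ∅ := by
      rw [Finset.eq_empty_iff_forall_notMem]
      intro k hk
      have := h hk
      simp only [Finset.mem_singleton] at this
      exact hi (this ▸ hk)
    have hc0 : c = 0 := Finsupp.support_eq_empty.mp hs
    rw [hc0]; simp [mdeg_zero]

variable (K : Type) [Field K]

lemma mem_support_mul_mon {f : MvPolynomial σ K} {w m : σ →₀ ℕ} :
    m ∈ (f * mon K w).support ↔ ∃ m' ∈ f.support, m' + w = m := by
  classical
  constructor
  · intro h
    have hsub := MvPolynomial.support_mul f (mon K w) h
    have hw : (mon K w).support = {w} := by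
      rw [mon, support_monomial, if_neg one_ne_zero]
    rw [hw] at hsub
    rw [Finset.mem_add] at hsub
    obtain ⟨a, ha, b, hb, hab⟩ := hsub
    simp only [Finset.mem_singleton] at hb
    exact ⟨a, ha, by rw [← hb]; exact hab⟩
  · rintro ⟨m', hm', rfl⟩
    rw [MvPolynomial.mem_support_iff, mon, coeff_mul_monomial, mul_one]
    exact MvPolynomial.mem_support_iff.mp hm'

lemma mem_colon_iff_s11 {S : Set (σ →₀ ℕ)} {w : σ →₀ ℕ} {f : MvPolynomial σ K} :
    f ∈ Submodule.colon (monIdeal K S) (Ideal.span {mon K w}) ↔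
      ∀ m ∈ f.support, ∃ s ∈ S, s ≤ m + w := by
  rw [Ideal.mem_colon_span_singleton]
  have himg : (mon K) '' S = (fun s => monomial s (1 : K)) '' S := rfl
  rw [monIdeal, himg, mem_ideal_span_monomial_image]
  constructor
  · intro h m hm
    exact h (m + w) ((mem_support_mul_mon K).mpr ⟨m, hm, rfl⟩)
  · intro h m hm
    obtain ⟨m', hm', rfl⟩ := (mem_support_mul_mon K).mp hm
    exact h m' hm'

lemma X_mem_colon_iff {S : Set (σ →₀ ℕ)} {w : σ →₀ ℕ} {i : σ} :
    (X i : MvPolynomial σ K) ∈ Submodule.colon (monIdeal K S) (Ideal.span {mon K w}) ↔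
      ∃ s ∈ S, s ≤ Finsupp.single i 1 + w := by
  rw [mem_colon_iff_s11, support_X]
  simp

/-- The combinatorial core of the quasi-linearity direction. -/
lemma key_exists {d : ℕ} {u w : σ →₀ ℕ} (hu : mdeg u = d) (hw : mdeg w = d)
    (hcard : u.support.card ≠ 2) {m v : σ →₀ ℕ}
    (hv : mdeg v = d) (hvu : v ≠ u) (hvw : v ≠ w) (hle : v ≤ m + w) :
    ∃ i, m i ≠ 0 ∧ ∃ v', (mdeg v' = d ∧ v' ≠ u ∧ v' ≠ w) ∧
      v' ≤ Finsupp.single i 1 + w := by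
  obtain ⟨i, hi⟩ := exists_lt_of_ne hvw (by rw [hv, hw])
  have hmi : m i ≠ 0 := by
    have h1 := Finsupp.le_def.mp hle i
    rw [Finsupp.add_apply] at h1
    omega
  refine ⟨i, hmi, ?_⟩
  by_contra hno
  push_neg at hno
  -- every j ∈ supp w with j ≠ i forces u = w - e_j + e_i
  have key : ∀ j ∈ w.support, j ≠ i → ∀ w', w = Finsupp.single j 1 + w' →
      u = w' + Finsupp.single i 1 := by
    intro j hj hji w' hw'
    set v' := w' + Finsupp.single i 1 with hv'
    have hdw' : mdeg w = 1 + mdeg w' := by rw [hw', mdeg_add, mdeg_single]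
    have h1 : mdeg v' = d := by rw [hv', mdeg_add, mdeg_single]; omega
    have h2 : v' ≠ w := by
      intro he
      have hee := congrArg (fun f => f j) he
      simp only [hv', hw'] at hee
      rw [Finsupp.add_apply, Finsupp.add_apply, Finsupp.single_apply,
        Finsupp.single_apply, if_neg (Ne.symm hji), if_pos rfl] at hee
      omega
    have h3 : v' ≤ Finsupp.single i 1 + w := by
      rw [hv', hw', add_comm (Finsupp.single i 1) (Finsupp.single j 1 + w')]
      exact add_le_add le_add_self le_rfl
    by_contra hne
    exact hno v' ⟨h1, fun h => hne h.symm, h2⟩ h3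
  by_cases hcase : ∃ j ∈ w.support, j ≠ i
  · obtain ⟨j0, hj0, hj0i⟩ := hcase
    have hle1 : Finsupp.single j0 1 ≤ w :=
      Finsupp.single_le_iff.mpr
        (Nat.one_le_iff_ne_zero.mpr (Finsupp.mem_support_iff.mp hj0))
    obtain ⟨w', hw'⟩ := le_iff_exists_add.mp hle1
    have hu' : u = w' + Finsupp.single i 1 := key j0 hj0 hj0i w' hw'
    -- supp w ⊆ {i, j0}
    have hsuppw : ∀ k, k ≠ i → k ≠ j0 → w k = 0 := by
      intro k hki hkj0
      by_contra hk
      have hk' : k ∈ w.support := Finsupp.mem_support_iff.mpr hk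
      have hle2 : Finsupp.single k 1 ≤ w :=
        Finsupp.single_le_iff.mpr (Nat.one_le_iff_ne_zero.mpr hk)
      obtain ⟨w'', hw''⟩ := le_iff_exists_add.mp hle2
      have hu'' : u = w'' + Finsupp.single i 1 := key k hk' hki w'' hw''
      have heq : w' = w'' := by
        have := hu'.symm.trans hu''
        exact add_right_cancel this
      have h1 := congrArg (fun f => f j0) hw'
      have h2 := congrArg (fun f => f j0) hw''
      rw [Finsupp.add_apply, Finsupp.single_apply, if_pos rfl] at h1
      rw [Finsupp.add_apply, Finsupp.single_apply, if_neg hkj0] at h2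
      rw [heq] at h1
      omega
    have hwle : w' ≤ w := by rw [hw']; exact le_add_self
    -- w' j0 = 0
    have hwj0 : w' j0 = 0 := by
      by_contra hne
      have hui : u i ≠ 0 := by
        rw [hu']; simp [Finsupp.add_apply, Finsupp.single_apply]
      have huj0 : u j0 ≠ 0 := by
        rw [hu']
        rw [Finsupp.add_apply, Finsupp.single_apply, if_neg (Ne.symm hj0i)]
        omega
      have hsub : u.support ⊆ {i, j0} := by
        intro k hk
        simp only [Finset.mem_insert, Finset.mem_singleton]
        by_contra hk2
        push_neg at hk2
        have hwk : w k = 0 := hsuppw k hk2.1 hk2.2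
        have hw'k : w' k = 0 := by
          have := Finsupp.le_def.mp hwle k
          omega
        have huk : u k = 0 := by
          rw [hu']
          simp only [Finsupp.add_apply, Finsupp.single_apply, if_neg (Ne.symm hk2.1)]
          omega
        exact Finsupp.mem_support_iff.mp hk huk
      have hsup : u.support = {i, j0} := by
        refine Finset.Subset.antisymm hsub ?_
        intro k hk
        simp only [Finset.mem_insert, Finset.mem_singleton] at hk
        rcases hk with rfl | rfl
        · exact Finsupp.mem_support_iff.mpr hui
        · exact Finsupp.mem_support_iff.mpr huj0
      rw [hsup, Finset.card_insert_of_notMem (by simpa using Ne.symm hj0i), Finset.card_singleton]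
        at hcard
      exact hcard rfl
    -- supp w' ⊆ {i}, supp u ⊆ {i}
    have hw'sub : w'.support ⊆ {i} := by
      intro k hk
      simp only [Finset.mem_singleton]
      by_contra hki
      have hk' : w' k ≠ 0 := Finsupp.mem_support_iff.mp hk
      by_cases hkj : k = j0
      · exact hk' (hkj ▸ hwj0)
      · have hwk : w k = 0 := hsuppw k hki hkj
        have := Finsupp.le_def.mp hwle k
        omega
    have husub : u.support ⊆ {i} := by
      intro k hk
      simp only [Finset.mem_singleton]
      by_contra hki
      have huk : u k = 0 := by
        rw [hu']
        simp only [Finsupp.add_apply, Finsupp.single_apply, if_neg (Ne.symm hki)]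
        have : w' k = 0 := by
          by_contra hc
          have := hw'sub (Finsupp.mem_support_iff.mpr hc)
          simp only [Finset.mem_singleton] at this
          exact hki this
        omega
      exact Finsupp.mem_support_iff.mp hk huk
    have hud : u i = d := by rw [← hu, mdeg_eq_of_support_subset husub]
    have hwi : w i = mdeg w' := by
      have h1 := congrArg (fun f => f i) hw'
      simp only [Finsupp.add_apply, Finsupp.single_apply, if_neg hj0i] at h1
      rw [h1, mdeg_eq_of_support_subset hw'sub]
      omega
    have hdw' : mdeg w = 1 + mdeg w' := by rw [hw', mdeg_add, mdeg_single]
    -- v i ≥ d, so v = single i d = u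
    have hvi : d ≤ v i := by omega
    have hvsing : Finsupp.single i d ≤ v := Finsupp.single_le_iff.mpr hvi
    have hveq : Finsupp.single i d = v :=
      eq_of_le_of_mdeg_le hvsing (by rw [mdeg_single, hv])
    have hueq : Finsupp.single i d = u := by
      have h1 : Finsupp.single i d ≤ u := Finsupp.single_le_iff.mpr (le_of_eq hud.symm)
      exact eq_of_le_of_mdeg_le h1 (by rw [mdeg_single, hu])
    exact hvu (hveq ▸ hueq ▸ rfl)
  · -- supp w ⊆ {i}
    push_neg at hcase
    have hsubw : w.support ⊆ {i} := by
      intro k hk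
      simp only [Finset.mem_singleton]
      exact hcase k hk
    have : w i = d := by rw [← hw, mdeg_eq_of_support_subset hsubw]
    have := apply_le_mdeg v i
    omega

end Aux

/-- Let `𝔪 = (x_1, …, x_n)`, `d ≥ 2`, and `u ∈ G(𝔪^d)`.  Then the
ideal generated by `G(𝔪^d) \ {u}`, i.e. by all monomials of degree `d` other than `u`,
is quasi-linear if and only if `|supp(u)| ≠ 2`. -/
theorem stmt_11 {K : Type} [Field K] {n d : ℕ} (hd : 2 ≤ d)
    (u : Fin n →₀ ℕ) (hu : mdeg u = d) :
    QuasiLinear K {v : Fin n →₀ ℕ | mdeg v = d ∧ v ≠ u} ↔ u.support.card ≠ 2 := by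
  classical
  set S : Set (Fin n →₀ ℕ) := {v : Fin n →₀ ℕ | mdeg v = d ∧ v ≠ u} with hS
  constructor
  · intro hql hcard
    obtain ⟨a, b, hab, hsupp⟩ := Finset.card_eq_two.mp hcard
    have ha : u a ≠ 0 := Finsupp.mem_support_iff.mp (by rw [hsupp]; simp)
    have hb : u b ≠ 0 := Finsupp.mem_support_iff.mp (by rw [hsupp]; simp)
    have hble : Finsupp.single b 1 ≤ u :=
      Finsupp.single_le_iff.mpr (Nat.one_le_iff_ne_zero.mpr hb)
    obtain ⟨u', hu'⟩ := le_iff_exists_add.mp hble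
    set w : Fin n →₀ ℕ := u' + Finsupp.single a 1 with hwdef
    have hdu' : mdeg u = 1 + mdeg u' := by rw [hu', mdeg_add, mdeg_single]
    have hwmdeg : mdeg w = d := by rw [hwdef, mdeg_add, mdeg_single]; omega
    have hua : u a = u' a := by
      have := congrArg (fun f => f a) hu'
      simpa [Finsupp.add_apply, Finsupp.single_apply, Ne.symm hab] using this
    have hwa : w a = u' a + 1 := by
      simp [hwdef, Finsupp.add_apply, Finsupp.single_apply]
    have hwne : w ≠ u := by
      intro he
      have := congrArg (fun f => f a) he
      simp only [hwa] at this
      omega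
    have hwS : w ∈ S := ⟨hwmdeg, hwne⟩
    obtain ⟨A, hA⟩ := hql w hwS
    have hkey : Finsupp.single b 1 + w = u + Finsupp.single a 1 := by
      rw [hwdef, hu']; abel
    -- X b is not in the colon ideal
    have hXb : (X b : MvPolynomial (Fin n) K) ∉
        Submodule.colon (monIdeal K (S \ {w})) (Ideal.span {mon K w}) := by
      rw [X_mem_colon_iff]
      rintro ⟨v, hvmem, hvle⟩
      obtain ⟨⟨hvd, hvu⟩, hvw⟩ : (mdeg v = d ∧ v ≠ u) ∧ v ≠ w := by
        obtain ⟨h1, h2⟩ := hvmem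
        exact ⟨h1, h2⟩
      have hdeg : mdeg (Finsupp.single b 1 + w) = mdeg v + 1 := by
        rw [mdeg_add, mdeg_single, hwmdeg, hvd]; omega
      obtain ⟨j, hj⟩ := exists_single_add hvle hdeg
      have hj' : u + Finsupp.single a 1 = v + Finsupp.single j 1 := by
        rw [← hkey, hj]
      by_cases hja : j = a
      · subst hja
        have : u = v := add_right_cancel hj'
        exact hvu this.symm
      · by_cases hjb : j = b
        · subst hjb
          have h2 : w + Finsupp.single j 1 = v + Finsupp.single j 1 := by
            rw [add_comm w, hkey, hj']
          exact hvw (add_right_cancel h2).symm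
        · have huj : u j ≠ 0 := by
            have hh := congrArg (fun f => f j) hj'
            simp only [Finsupp.add_apply, Finsupp.single_apply] at hh
            simp only [if_neg (show ¬a = j from fun h => hja h.symm), if_pos rfl,
              eq_self_iff_true, if_true] at hh
            omega
          have hjmem : j ∈ u.support := Finsupp.mem_support_iff.mpr huj
          rw [hsupp] at hjmem
          simp only [Finset.mem_insert, Finset.mem_singleton] at hjmem
          rcases hjmem with rfl | rfl
          · exact hja rfl
          · exact hjb rfl
    -- but x_b^(u a + 1) is in the colon ideal
    have hub : u b = 1 + u' b := by
      have := congrArg (fun f => f b) hu'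
      simpa [Finsupp.add_apply, Finsupp.single_apply] using this
    have hwb : w b = u' b := by
      simp [hwdef, Finsupp.add_apply, Finsupp.single_apply, hab]
    have hdab : d = u a + u b := by
      rw [← hu, mdeg, Finsupp.sum, hsupp, Finset.sum_pair hab]
    have hmem : mon K (Finsupp.single b (u a + 1)) ∈
        Submodule.colon (monIdeal K (S \ {w})) (Ideal.span {mon K w}) := by
      rw [mem_colon_iff_s11]
      intro m hm
      have hsup : (mon K (Finsupp.single b (u a + 1))).support
          = {Finsupp.single b (u a + 1)} := by
        rw [mon, support_monomial, if_neg one_ne_zero]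
      rw [hsup, Finset.mem_singleton] at hm
      subst hm
      refine ⟨Finsupp.single b d, ⟨⟨mdeg_single b d, ?_⟩, ?_⟩, ?_⟩
      · intro he
        have := congrArg (fun f => f a) he
        simp only [Finsupp.single_apply, if_neg (Ne.symm hab)] at this
        exact ha this.symm
      · intro he
        have := congrArg (fun f => f a) he
        simp only [Finsupp.single_apply, if_neg (Ne.symm hab), hwa] at this
        omega
      · refine Finsupp.le_def.mpr fun k => ?_
        rw [Finsupp.add_apply]
        by_cases hk : k = b
        · subst hk
          rw [Finsupp.single_apply, if_pos rfl, Finsupp.single_apply, if_pos rfl, hwb]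
          omega
        · rw [Finsupp.single_apply, if_neg (fun h => hk h.symm)]
          omega
    rw [hA] at hmem hXb
    rw [mem_ideal_span_X_image] at hmem
    obtain ⟨i, hiA, hine⟩ := hmem (Finsupp.single b (u a + 1)) (by
      rw [mon, support_monomial, if_neg one_ne_zero]; simp)
    have hib : i = b := by
      by_contra hne
      rw [Finsupp.single_apply, if_neg (fun h => hne h.symm)] at hine
      exact hine rfl
    subst hib
    exact hXb (Ideal.subset_span ⟨i, hiA, rfl⟩)
  · intro hcard w hwS
    obtain ⟨hwd, hwu⟩ := hwS
    refine ⟨{i | (X i : MvPolynomial (Fin n) K) ∈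
      Submodule.colon (monIdeal K (S \ {w})) (Ideal.span {mon K w})}, ?_⟩
    apply le_antisymm
    · intro f hf
      rw [mem_ideal_span_X_image]
      intro m hm
      rw [mem_colon_iff_s11] at hf
      obtain ⟨v, hvmem, hvle⟩ := hf m hm
      obtain ⟨⟨hvd, hvu⟩, hvw⟩ : (mdeg v = d ∧ v ≠ u) ∧ v ≠ w := by
        obtain ⟨h1, h2⟩ := hvmem
        exact ⟨h1, h2⟩
      obtain ⟨i, hmi, v', hv', hv'le⟩ := key_exists hu hwd hcard hvd hvu hvw hvle
      refine ⟨i, ?_, hmi⟩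
      simp only [Set.mem_setOf_eq]
      rw [X_mem_colon_iff]
      exact ⟨v', ⟨⟨hv'.1, hv'.2.1⟩, hv'.2.2⟩, hv'le⟩
    · rw [Ideal.span_le]
      rintro _ ⟨i, hi, rfl⟩
      exact hi
end

section
/- Let C be a d-uniform clutter on [n] and e a (d−1)-subset of [n]. Then e is a simplicial maximal subcircuit of C if and only if I(\bar{C}) : x_e is generated by a proper subset of {x_i : i ∈ [n]\e}. In particular, if e ∈ Simp(C), then x_e is strongly linear over I(\bar{C}). -/
open MvPolynomial

/-- The squarefree exponent vector of a subset `s ⊆ [n]`, i.e. `x_s = ∏_{i ∈ s} x_i`. -/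
noncomputable def expOf {n : ℕ} (s : Finset (Fin n)) : Fin n →₀ ℕ :=
  ∑ i ∈ s, Finsupp.single i 1

section Aux

variable {K : Type} [Field K] {σ : Type}

lemma aux_mem_monIdeal {S : Set (σ →₀ ℕ)} {f : MvPolynomial σ K} :
    f ∈ monIdeal K S ↔ ∀ v ∈ f.support, ∃ w ∈ S, w ≤ v := by
  classical
  constructor
  · intro hf
    refine Submodule.span_induction ?_ ?_ ?_ ?_ hf
    · rintro g ⟨w, hw, rfl⟩ v hv
      rw [mon, MvPolynomial.support_monomial] at hv
      simp only [one_ne_zero, if_false, Finset.mem_singleton] at hv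
      exact ⟨w, hw, hv ▸ le_refl w⟩
    · intro v hv; simp at hv
    · intro a b _ _ ha hb v hv
      rcases Finset.mem_union.1 (MvPolynomial.support_add hv) with h | h
      · exact ha v h
      · exact hb v h
    · intro r a _ ha v hv
      rw [smul_eq_mul] at hv
      obtain ⟨x, hx, y, hy, rfl⟩ := Finset.mem_add.1 (MvPolynomial.support_mul r a hv)
      obtain ⟨w, hw, hwy⟩ := ha y hy
      exact ⟨w, hw, hwy.trans (le_add_self)⟩
  · intro h
    rw [f.as_sum]
    refine Ideal.sum_mem _ fun v hv => ?_
    obtain ⟨w, hw, hwv⟩ := h v hv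
    have hmul : (MvPolynomial.monomial v (MvPolynomial.coeff v f) : MvPolynomial σ K)
        = MvPolynomial.monomial (v - w) (MvPolynomial.coeff v f) * mon K w := by
      rw [mon, MvPolynomial.monomial_mul, mul_one, tsub_add_cancel_of_le hwv]
    rw [hmul]
    exact Ideal.mul_mem_left _ _ (Ideal.subset_span ⟨w, hw, rfl⟩)

lemma aux_mem_colon {S : Set (σ →₀ ℕ)} {u : σ →₀ ℕ} {f : MvPolynomial σ K} :
    f ∈ Submodule.colon (monIdeal K S) (Ideal.span {mon K u}) ↔
      ∀ v ∈ f.support, ∃ w ∈ S, w ≤ v + u := by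
  classical
  rw [Ideal.mem_colon_span_singleton, aux_mem_monIdeal]
  constructor
  · intro h v hv
    have hv' : v + u ∈ (f * mon K u).support := by
      rw [MvPolynomial.mem_support_iff, mon, MvPolynomial.coeff_mul_monomial, mul_one]
      rwa [MvPolynomial.mem_support_iff] at hv
    exact h _ hv'
  · intro h v hv
    obtain ⟨x, hx, y, hy, rfl⟩ := Finset.mem_add.1 (MvPolynomial.support_mul f (mon K u) hv)
    rw [mon, MvPolynomial.support_monomial] at hy
    simp only [one_ne_zero, if_false, Finset.mem_singleton] at hy
    subst hy
    exact h x hx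

lemma aux_span_X_eq {A : Set σ} :
    Ideal.span ((fun i => (X i : MvPolynomial σ K)) '' A)
      = monIdeal K ((fun i => Finsupp.single i 1) '' A) := by
  rw [monIdeal, Set.image_image]
  rfl

lemma aux_expOf_apply {n : ℕ} (s : Finset (Fin n)) (i : Fin n) :
    expOf s i = if i ∈ s then 1 else 0 := by
  classical
  rw [expOf, Finsupp.finset_sum_apply]
  simp [Finsupp.single_apply]

lemma aux_expOf_subset {n : ℕ} {s t : Finset (Fin n)} (h : expOf s ≤ expOf t) : s ⊆ t := by
  intro i hi
  have := h i
  rw [aux_expOf_apply, aux_expOf_apply, if_pos hi] at this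
  by_contra hc
  rw [if_neg hc] at this
  omega

lemma aux_expOf_insert {n : ℕ} {e : Finset (Fin n)} {i : Fin n} (hi : i ∉ e) :
    expOf (insert i e) = Finsupp.single i 1 + expOf e := by
  rw [expOf, Finset.sum_insert hi]; rfl

lemma aux_expOf_sdiff_le {n : ℕ} (F e : Finset (Fin n)) :
    expOf F ≤ expOf (F \ e) + expOf e := by
  classical
  intro i
  rw [Finsupp.add_apply, aux_expOf_apply, aux_expOf_apply, aux_expOf_apply]
  by_cases hF : i ∈ F
  · by_cases he : i ∈ e
    · simp [hF, he]
    · simp [hF, he, Finset.mem_sdiff]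
  · simp [hF]

end Aux

/-- Let `C` be a `d`-uniform clutter on `[n]` and `e` a `(d−1)`-subset
of `[n]`, with closed neighborhood `N_C[e] = e ∪ {i : e ∪ {i} ∈ C}`.  Then `e` is a
simplicial maximal subcircuit of `C` (i.e. `|N_C[e]| ≥ d` and every `d`-subset of
`N_C[e]` is a circuit of `C`) if and only if `I(C̄) : x_e` is generated by a proper
subset of `{x_i : i ∈ [n] \ e}`.  In particular, if `e ∈ Simp(C)`, then `x_e` is
strongly linear over `I(C̄)`, i.e. `I(C̄) : x_e` is generated by variables. -/
theorem stmt_19 {K : Type} [Field K] {n d : ℕ} (hd : 1 ≤ d)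
    (C : Finset (Finset (Fin n))) (hC : ∀ F ∈ C, F.card = d)
    (e : Finset (Fin n)) (he : e.card = d - 1) :
    ((d ≤ (e ∪ Finset.univ.filter (fun i => insert i e ∈ C)).card ∧
      ∀ F : Finset (Fin n), F ⊆ e ∪ Finset.univ.filter (fun i => insert i e ∈ C) →
        F.card = d → F ∈ C)
    ↔ ∃ A : Finset (Fin n), A ⊂ eᶜ ∧
        Submodule.colon
          (monIdeal K {w : Fin n →₀ ℕ | ∃ F : Finset (Fin n), F.card = d ∧ F ∉ C ∧ w = expOf F})
          (Ideal.span {mon K (expOf e)})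
        = Ideal.span ((fun i => (X i : MvPolynomial (Fin n) K)) '' (A : Set (Fin n)))) ∧
    ((d ≤ (e ∪ Finset.univ.filter (fun i => insert i e ∈ C)).card ∧
      ∀ F : Finset (Fin n), F ⊆ e ∪ Finset.univ.filter (fun i => insert i e ∈ C) →
        F.card = d → F ∈ C) →
      genByVars (Submodule.colon
        (monIdeal K {w : Fin n →₀ ℕ | ∃ F : Finset (Fin n), F.card = d ∧ F ∉ C ∧ w = expOf F})
        (Ideal.span {mon K (expOf e)}))) := by
  classical
  have hcard_insert : ∀ i : Fin n, i ∉ e → (insert i e).card = d := by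
    intro i hi; rw [Finset.card_insert_of_notMem hi, he]; omega
  have hiff : (d ≤ (e ∪ Finset.univ.filter (fun i => insert i e ∈ C)).card ∧
      ∀ F : Finset (Fin n), F ⊆ e ∪ Finset.univ.filter (fun i => insert i e ∈ C) →
        F.card = d → F ∈ C)
    ↔ ∃ A : Finset (Fin n), A ⊂ eᶜ ∧
        Submodule.colon
          (monIdeal K {w : Fin n →₀ ℕ | ∃ F : Finset (Fin n), F.card = d ∧ F ∉ C ∧ w = expOf F})
          (Ideal.span {mon K (expOf e)})
        = Ideal.span ((fun i => (X i : MvPolynomial (Fin n) K)) '' (A : Set (Fin n))) := by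
    constructor
    · rintro ⟨hge, hsimp⟩
      refine ⟨eᶜ.filter (fun i => insert i e ∉ C), ?_, ?_⟩
      · have h1 : ¬ (e ∪ Finset.univ.filter (fun i => insert i e ∈ C) ⊆ e) := by
          intro hsub
          have := Finset.card_le_card hsub
          omega
        obtain ⟨i, hiUN, hie⟩ := Finset.not_subset.1 h1
        have hiN : insert i e ∈ C := by
          rcases Finset.mem_union.1 hiUN with h | h
          · exact absurd h hie
          · exact (Finset.mem_filter.1 h).2
        refine Finset.ssubset_iff_subset_ne.2 ⟨Finset.filter_subset _ _, fun hEq => ?_⟩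
        have hmem : i ∈ eᶜ.filter (fun i => insert i e ∉ C) := by
          rw [hEq]; exact Finset.mem_compl.2 hie
        exact (Finset.mem_filter.1 hmem).2 hiN
      · apply le_antisymm
        · intro f hf
          rw [aux_mem_colon] at hf
          rw [aux_span_X_eq, aux_mem_monIdeal]
          intro v hv
          obtain ⟨w, hwS, hle⟩ := hf v hv
          obtain ⟨F, hFc, hFC, rfl⟩ := hwS
          have hFsub : ¬ F ⊆ e ∪ Finset.univ.filter (fun i => insert i e ∈ C) :=
            fun hsub => hFC (hsimp F hsub hFc)
          obtain ⟨i, hiF, hiUN⟩ := Finset.not_subset.1 hFsub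
          have hie : i ∉ e := fun h => hiUN (Finset.mem_union_left _ h)
          have hiC : insert i e ∉ C := fun h =>
            hiUN (Finset.mem_union_right _ (Finset.mem_filter.2 ⟨Finset.mem_univ _, h⟩))
          refine ⟨Finsupp.single i 1, ⟨i, ?_, rfl⟩, ?_⟩
          · exact Finset.mem_coe.2 (Finset.mem_filter.2 ⟨Finset.mem_compl.2 hie, hiC⟩)
          · rw [Finsupp.single_le_iff]
            have h2 := hle i
            rw [Finsupp.add_apply, aux_expOf_apply, if_pos hiF, aux_expOf_apply,
              if_neg hie] at h2
            omega
        · rw [Ideal.span_le]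
          rintro g ⟨i, hiA, rfl⟩
          obtain ⟨hieC, hiC⟩ := Finset.mem_filter.1 (Finset.mem_coe.1 hiA)
          have hie : i ∉ e := Finset.mem_compl.1 hieC
          rw [SetLike.mem_coe, aux_mem_colon]
          intro v hv
          rw [MvPolynomial.support_X, Finset.mem_singleton] at hv
          subst hv
          exact ⟨expOf (insert i e), ⟨insert i e, hcard_insert i hie, hiC, rfl⟩,
            le_of_eq (aux_expOf_insert hie)⟩
    · rintro ⟨A, hA, hcolon⟩
      have claim : ∀ i : Fin n, i ∉ e → i ∉ A → insert i e ∈ C := by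
        intro i hie hiA
        by_contra hC'
        have hX : (X i : MvPolynomial (Fin n) K) ∈ Submodule.colon
            (monIdeal K {w : Fin n →₀ ℕ |
              ∃ F : Finset (Fin n), F.card = d ∧ F ∉ C ∧ w = expOf F})
            (Ideal.span {mon K (expOf e)}) := by
          rw [aux_mem_colon]
          intro v hv
          rw [MvPolynomial.support_X, Finset.mem_singleton] at hv
          subst hv
          exact ⟨expOf (insert i e), ⟨insert i e, hcard_insert i hie, hC', rfl⟩,
            le_of_eq (aux_expOf_insert hie)⟩
        rw [hcolon, aux_span_X_eq, aux_mem_monIdeal] at hX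
        obtain ⟨w, ⟨j, hjA, rfl⟩, hle⟩ := hX (Finsupp.single i 1)
          (by rw [MvPolynomial.support_X]; exact Finset.mem_singleton_self _)
        have hji : j = i := by
          have h1 := Finsupp.single_le_iff.1 hle
          by_contra hne
          rw [Finsupp.single_apply, if_neg (fun h => hne h.symm)] at h1
          omega
        exact hiA (Finset.mem_coe.1 (hji ▸ hjA))
      constructor
      · obtain ⟨i, hieC, hiA⟩ := Finset.exists_of_ssubset hA
        have hie : i ∉ e := Finset.mem_compl.1 hieC
        have hiC := claim i hie hiA
        have hsub : insert i e ⊆ e ∪ Finset.univ.filter (fun i => insert i e ∈ C) := by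
          intro j hj
          rcases Finset.mem_insert.1 hj with rfl | hj
          · exact Finset.mem_union_right _ (Finset.mem_filter.2 ⟨Finset.mem_univ _, hiC⟩)
          · exact Finset.mem_union_left _ hj
        calc d = (insert i e).card := (hcard_insert i hie).symm
          _ ≤ _ := Finset.card_le_card hsub
      · intro F hFsub hFc
        by_contra hFC
        have hm : mon K (expOf (F \ e)) ∈ Submodule.colon
            (monIdeal K {w : Fin n →₀ ℕ |
              ∃ F : Finset (Fin n), F.card = d ∧ F ∉ C ∧ w = expOf F})
            (Ideal.span {mon K (expOf e)}) := by
          rw [aux_mem_colon]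
          intro v hv
          rw [mon, MvPolynomial.support_monomial] at hv
          simp only [one_ne_zero, if_false, Finset.mem_singleton] at hv
          subst hv
          exact ⟨expOf F, ⟨F, hFc, hFC, rfl⟩, aux_expOf_sdiff_le F e⟩
        rw [hcolon, aux_span_X_eq, aux_mem_monIdeal] at hm
        obtain ⟨w, ⟨j, hjA, rfl⟩, hle⟩ := hm (expOf (F \ e)) (by
          rw [mon, MvPolynomial.support_monomial]
          simp only [one_ne_zero, if_false]
          exact Finset.mem_singleton_self _)
        have hj : j ∈ F \ e := by
          have h1 := Finsupp.single_le_iff.1 hle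
          rw [aux_expOf_apply] at h1
          by_contra hc
          rw [if_neg hc] at h1
          omega
        obtain ⟨hjF, hje⟩ := Finset.mem_sdiff.1 hj
        have hjN : insert j e ∈ C := by
          rcases Finset.mem_union.1 (hFsub hjF) with h | h
          · exact absurd h hje
          · exact (Finset.mem_filter.1 h).2
        have hXj : (X j : MvPolynomial (Fin n) K) ∈
            Ideal.span ((fun i => (X i : MvPolynomial (Fin n) K)) '' (A : Set (Fin n))) :=
          Ideal.subset_span ⟨j, hjA, rfl⟩
        rw [← hcolon, aux_mem_colon] at hXj
        obtain ⟨w, ⟨G, hGc, hGC, rfl⟩, hle2⟩ := hXj (Finsupp.single j 1)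
          (by rw [MvPolynomial.support_X]; exact Finset.mem_singleton_self _)
        have hGle : expOf G ≤ expOf (insert j e) := by
          rw [aux_expOf_insert hje]; exact hle2
        have hGeq : G = insert j e := Finset.eq_of_subset_of_card_le
          (aux_expOf_subset hGle) (by rw [hcard_insert j hje, hGc])
        exact hGC (hGeq ▸ hjN)
  refine ⟨hiff, fun h => ?_⟩
  obtain ⟨A, _, hEq⟩ := hiff.1 h
  exact ⟨(A : Set (Fin n)), hEq⟩
end
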